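/- Let E be a complex inner product space, let D : E → E be a symmetric complex-linear map (⟨Dψ, φ⟩ = ⟨ψ, Dφ⟩ for all ψ, φ), and let χ : E → E be a symmetric complex-linear involution (χ ∘ χ = id) satisfying D ∘ χ = -χ ∘ D. Set P^± := ½(id ± χ). Suppose λ ≥ 0 is a real number, Ψ ∈ E satisfies D Ψ = λ • Ψ, and φ ∈ E satisfies P^+ φ = P^+ Ψ. Then Re⟨Dφ, φ⟩ ≤ λ ‖φ‖². -/

import Mathlib

/-- If `D` is symmetric and anticommutes with a symmetric involution `χ`,
`Ψ` is an eigenvector of `D` for the real eigenvalue `λ ≥ 0`, and `φ` agrees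
with `Ψ` under `P⁺ := ½(id + χ)`, then `Re⟨Dφ, φ⟩ ≤ λ ‖φ‖²`. -/
theorem re_inner_D_le_of_eigen_boundary
    {E : Type*} [NormedAddCommGroup E] [InnerProductSpace ℂ E]
    (D χ : E →ₗ[ℂ] E)
    (hDsym : ∀ ψ φ : E, (inner ℂ (D ψ) φ : ℂ) = inner ℂ ψ (D φ))
    (hχsym : ∀ ψ φ : E, (inner ℂ (χ ψ) φ : ℂ) = inner ℂ ψ (χ φ))
    (hχ2 : χ ∘ₗ χ = (LinearMap.id : E →ₗ[ℂ] E))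
    (hanti : D ∘ₗ χ = - (χ ∘ₗ D))
    (Pp Pm : E →ₗ[ℂ] E)
    (hPp : Pp = (1/2 : ℂ) • ((LinearMap.id : E →ₗ[ℂ] E) + χ))
    (hPm : Pm = (1/2 : ℂ) • ((LinearMap.id : E →ₗ[ℂ] E) - χ))
    (lam : ℝ) (hlam : 0 ≤ lam) (Ψ φ : E)
    (hΨ : D Ψ = (lam : ℂ) • Ψ)
    (hφ : Pp φ = Pp Ψ) :
    (inner ℂ (D φ) φ : ℂ).re ≤ lam * ‖φ‖^2 := by
  have hχχ : ∀ x : E, χ (χ x) = x := fun x => by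
    have := LinearMap.ext_iff.mp hχ2 x
    simpa using this
  have hant : ∀ x : E, D (χ x) = - χ (D x) := fun x => by
    have := LinearMap.ext_iff.mp hanti x
    simpa using this
  set a := Pp φ with ha
  set b := Pm φ with hb
  set u := Pp Ψ with hu
  set v := Pm Ψ with hv
  have hau : a = u := hφ
  -- eigenspace properties
  have hχa : χ a = a := by
    rw [ha, hPp]; simp [hχχ]; abel
  have hχb : χ b = -b := by
    rw [hb, hPm]; simp [hχχ, smul_sub]
  have hχu : χ u = u := by
    rw [hu, hPp]; simp [hχχ]; abel
  have hχv : χ v = -v := by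
    rw [hv, hPm]; simp [hχχ, smul_sub]
  have hab : a + b = φ := by
    rw [ha, hb, hPp, hPm]; simp [smul_sub, smul_add]; module
  have huv : u + v = Ψ := by
    rw [hu, hv, hPp, hPm]; simp [smul_sub, smul_add]; module
  -- orthogonality
  have horth : ∀ x y : E, χ x = x → χ y = -y → (inner ℂ x y : ℂ) = 0 := by
    intro x y hx hy
    have h := hχsym x y
    rw [hx, hy, inner_neg_right] at h
    linear_combination (1/2 : ℂ) * h
  have horth' : ∀ x y : E, χ x = -x → χ y = y → (inner ℂ x y : ℂ) = 0 := by
    intro x y hx hy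
    have : (inner ℂ y x : ℂ) = 0 := horth y x hy hx
    rw [← inner_conj_symm]
    simp [this]
  -- D swaps eigenspaces
  have hχDa : χ (D a) = -(D a) := by
    have := hant a; rw [hχa] at this
    rw [eq_comm, neg_eq_iff_eq_neg] at this
    rw [← this]
  have hχDb : χ (D b) = D b := by
    have h := hant b; rw [hχb, map_neg] at h
    exact (neg_injective h).symm
  -- decompose eigen equation : D u = lam • v, D v = lam • u
  have hsum : D u + D v = (lam : ℂ) • u + (lam : ℂ) • v := by
    have : D (u + v) = (lam : ℂ) • (u + v) := by rw [huv, hΨ]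
    rw [map_add, smul_add] at this
    exact this
  have hχDu : χ (D u) = -(D u) := by
    have := hant u; rw [hχu] at this
    rw [eq_comm, neg_eq_iff_eq_neg] at this
    rw [← this]
  have hχDv : χ (D v) = D v := by
    have h := hant v; rw [hχv, map_neg] at h
    exact (neg_injective h).symm
  have hDu : D u = (lam : ℂ) • v := by
    -- w := D u - lam • v satisfies χ w = -w and χ w = w
    set w := D u - (lam : ℂ) • v with hw
    have hχw : χ w = -w := by
      rw [hw, map_sub, map_smul, hχDu, hχv]
      simp
      abel
    have hzw : D v - (lam : ℂ) • u = -w := by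
      show D v - (lam : ℂ) • u = -(D u - (lam : ℂ) • v)
      rw [neg_sub, sub_eq_sub_iff_add_eq_add, add_comm (D v) (D u),
        add_comm ((lam : ℂ) • v) ((lam : ℂ) • u)]
      exact hsum
    have hχz : χ (D v - (lam : ℂ) • u) = D v - (lam : ℂ) • u := by
      rw [map_sub, map_smul, hχDv, hχu]
    rw [hzw, map_neg, hχw] at hχz
    have h2w : (2 : ℂ) • w = 0 := by
      rw [two_smul]
      have : w = -w := by simpa using hχz
      linear_combination (norm := abel) this
    have hw0 : w = 0 := by
      rcases smul_eq_zero.mp h2w with h | h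
      · exact absurd h (by norm_num)
      · exact h
    have : D u - (lam : ℂ) • v = 0 := by rw [← hw, hw0]
    linear_combination (norm := module) this
  have hDv : D v = (lam : ℂ) • u := by
    have : D v = (lam : ℂ) • u + (lam : ℂ) • v - D u := by
      linear_combination (norm := module) hsum
    rw [this, hDu]; module
  -- transfer identity
  have htrans : lam * ‖v‖^2 = lam * ‖u‖^2 := by
    have h := hDsym u v
    rw [hDu, hDv, inner_smul_left, inner_smul_right] at h
    have hre := congrArg Complex.re h
    simp only [Complex.mul_re, Complex.conj_ofReal, Complex.ofReal_re, Complex.ofReal_im] at hre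
    have h1 : (inner ℂ v v : ℂ).re = ‖v‖^2 := by
      rw [inner_self_eq_norm_sq_to_K]; simp [← Complex.ofReal_pow]
    have h2 : (inner ℂ u u : ℂ).re = ‖u‖^2 := by
      rw [inner_self_eq_norm_sq_to_K]; simp [← Complex.ofReal_pow]
    have h3 : (inner ℂ v v : ℂ).im = 0 := by
      rw [inner_self_eq_norm_sq_to_K]; simp [← Complex.ofReal_pow]
    have h4 : (inner ℂ u u : ℂ).im = 0 := by
      rw [inner_self_eq_norm_sq_to_K]; simp [← Complex.ofReal_pow]
    rw [h1, h2, h3, h4] at hre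
    linarith [hre]
  -- main expansion
  have hDa : D a = (lam : ℂ) • v := by rw [hau, hDu]
  have hexp : (inner ℂ (D φ) φ : ℂ) = (lam : ℂ) * inner ℂ v b + (lam : ℂ) * inner ℂ b v := by
    rw [← hab, map_add, inner_add_left, inner_add_right, inner_add_right]
    rw [horth' (D a) a hχDa hχa, horth (D b) b hχDb hχb]
    rw [hDsym b a, hDa, inner_smul_left, inner_smul_right]
    simp [Complex.conj_ofReal]
  -- bound
  have hre : (inner ℂ (D φ) φ : ℂ).re = lam * ((inner ℂ v b : ℂ).re + (inner ℂ b v : ℂ).re) := by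
    rw [hexp]
    simp [Complex.add_re, Complex.mul_re]
    ring
  have hsymm : (inner ℂ b v : ℂ).re = (inner ℂ v b : ℂ).re := by
    have := inner_conj_symm (𝕜 := ℂ) v b
    rw [← this, Complex.conj_re]
  have hbound : 2 * (inner ℂ v b : ℂ).re ≤ ‖v‖^2 + ‖b‖^2 := by
    have h1 : (inner ℂ v b : ℂ).re ≤ ‖v‖ * ‖b‖ := by
      calc (inner ℂ v b : ℂ).re ≤ ‖(inner ℂ v b : ℂ)‖ := Complex.re_le_norm _
        _ ≤ ‖v‖ * ‖b‖ := norm_inner_le_norm v b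
    nlinarith [sq_nonneg (‖v‖ - ‖b‖)]
  -- Pythagoras
  have hpyth : ‖φ‖^2 = ‖a‖^2 + ‖b‖^2 := by
    have h0 : (inner ℂ a b : ℂ).re = 0 := by rw [horth a b hχa hχb]; simp
    have := @norm_add_sq ℂ E _ _ _ a b
    rw [hab] at this
    rw [this]
    simp [h0]
  have hnorm_au : ‖a‖ = ‖u‖ := by rw [hau]
  rw [hre, hpyth, hnorm_au]
  have : lam * ((inner ℂ v b : ℂ).re + (inner ℂ b v : ℂ).re) = lam * (2 * (inner ℂ v b : ℂ).re) := by
    rw [hsymm]; ring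
  rw [this]
  have h5 : lam * (2 * (inner ℂ v b : ℂ).re) ≤ lam * (‖v‖^2 + ‖b‖^2) :=
    mul_le_mul_of_nonneg_left hbound hlam
  calc lam * (2 * (inner ℂ v b : ℂ).re) ≤ lam * (‖v‖^2 + ‖b‖^2) := h5
    _ = lam * ‖v‖^2 + lam * ‖b‖^2 := by ring
    _ = lam * ‖u‖^2 + lam * ‖b‖^2 := by rw [htrans]
    _ = lam * (‖u‖^2 + ‖b‖^2) := by ring
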